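/- arXiv:1912.08626 — 3 statements merged into one kernel-verified Lean document; each statement's English description precedes it below -/
import Mathlib

section
/- Let (a_n)_{n≥0} be a sequence of complex numbers that is ultimately periodic with period q ≥ 1, say a_{n+q} = a_n for all n ≥ K. Suppose that for every rational α ∈ (0,1), sup_{0≤r<1} |∑_{n=0}^{∞} a_n r^n e^{2πi n α}| < ∞. Then a_{K+j} = a_{K+j'} for all 0 ≤ j, j' ≤ q−1; i.e., the sequence is ultimately constant. -/
open Complex Finset Filter Topology

noncomputable def e (x : ℝ) : ℂ := Complex.exp (2 * Real.pi * Complex.I * x)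

lemma e_norm (x : ℝ) : ‖e x‖ = 1 := by
  unfold e
  rw [show (2:ℂ) * Real.pi * Complex.I * x = (2*Real.pi*x : ℝ) * Complex.I by push_cast; ring]
  exact Complex.norm_exp_ofReal_mul_I _

lemma e_nat_mul (n : ℕ) (x : ℝ) : e (n * x) = (e x) ^ n := by
  unfold e
  rw [← Complex.exp_nat_mul]
  push_cast; ring_nf

lemma e_int (n : ℤ) : e n = 1 := by
  unfold e
  rw [show (2:ℂ)*Real.pi*Complex.I*((n:ℝ):ℂ) = (n:ℂ)*(2*Real.pi*Complex.I) by push_cast; ring]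
  exact Complex.exp_int_mul_two_pi_mul_I n

lemma e_add (x y : ℝ) : e (x + y) = e x * e y := by
  unfold e
  rw [← Complex.exp_add]
  push_cast; ring_nf

lemma e_ne_one (x : ℝ) (h0 : x ≠ 0) (h1 : |x| < 1) : e x ≠ 1 := by
  intro h
  unfold e at h
  rw [Complex.exp_eq_one_iff] at h
  obtain ⟨n, hn⟩ := h
  have h2 : (2*(Real.pi:ℂ)*Complex.I) ≠ 0 := by
    simp [Real.pi_ne_zero, Complex.I_ne_zero]
  have hx : (x:ℂ) = (n:ℂ) := by
    have : (2*(Real.pi:ℂ)*Complex.I) * x = (2*(Real.pi:ℂ)*Complex.I) * n := by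
      rw [hn]; ring
    exact mul_left_cancel₀ h2 this
  have hx' : x = (n:ℝ) := by exact_mod_cast hx
  rw [hx'] at h0 h1
  rw [abs_lt] at h1
  have hn1 : ((-1:ℤ):ℝ) < (n:ℝ) := by push_cast; linarith [h1.1]
  have hn2 : ((n:ℝ)) < ((1:ℤ):ℝ) := by push_cast; linarith [h1.2]
  have : n = 0 := by
    have a1 : (-1:ℤ) < n := by exact_mod_cast hn1
    have a2 : n < (1:ℤ) := by exact_mod_cast hn2
    omega
  simp [this] at h0

theorem stmt_6 (a : ℕ → ℂ) (q K : ℕ) (hq : 1 ≤ q)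
    (hper : ∀ n : ℕ, K ≤ n → a (n + q) = a n)
    (hbd : ∀ α : ℚ, α ∈ Set.Ioo (0 : ℚ) 1 →
      ∃ M : ℝ, ∀ r : ℝ, 0 ≤ r → r < 1 →
        ‖∑' n : ℕ, a n * (r : ℂ) ^ n * e (n * (α : ℝ))‖ ≤ M) :
    ∀ j j' : ℕ, j ≤ q - 1 → j' ≤ q - 1 → a (K + j) = a (K + j') := by
  -- Step A: a is bounded
  have key : ∀ n, ∃ m, m < K + q ∧ a n = a m := by
    intro n
    induction n using Nat.strong_induction_on with
    | _ n ih =>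
      by_cases h : n < K + q
      · exact ⟨n, h, rfl⟩
      · push_neg at h
        obtain ⟨m, hm, hem⟩ := ih (n - q) (by omega)
        refine ⟨m, hm, ?_⟩
        rw [← hem]
        have h1 : K ≤ n - q := by omega
        have h2 : (n - q) + q = n := by omega
        rw [← hper _ h1, h2]
  set C : ℝ := ∑ m ∈ Finset.range (K + q), ‖a m‖ with hC
  have ha : ∀ n, ‖a n‖ ≤ C := by
    intro n
    obtain ⟨m, hm, hem⟩ := key n
    rw [hem]
    exact Finset.single_le_sum (fun i _ => norm_nonneg (a i)) (Finset.mem_range.mpr hm)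
  -- Step B: summability
  have hsum : ∀ z : ℂ, ‖z‖ < 1 → Summable (fun n => a n * z ^ n) := by
    intro z hz
    apply Summable.of_norm_bounded
      ((summable_geometric_of_lt_one (norm_nonneg z) hz).mul_left C)
    intro n
    rw [norm_mul, norm_pow]
    exact mul_le_mul_of_nonneg_right (ha n) (by positivity)
  -- Step C: identity  (1 - z^q) * f(z) = G(z)
  set G : ℂ → ℂ := fun z => ∑ n ∈ Finset.range (K + q), a n * z ^ n
      - ∑ n ∈ Finset.range K, a n * z ^ (n + q) with hG
  have hid : ∀ z : ℂ, ‖z‖ < 1 → (1 - z ^ q) * ∑' n, a n * z ^ n = G z := by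
    intro z hz
    have hs := hsum z hz
    have h1 := Summable.sum_add_tsum_nat_add (f := fun n => a n * z ^ n) (K + q) hs
    have hs2 : Summable (fun n => a n * z ^ (n + q)) := by
      have := hs.mul_right (z ^ q)
      apply this.congr
      intro n; simp [pow_add]; ring
    have h2 := Summable.sum_add_tsum_nat_add (f := fun n => a n * z ^ (n + q)) K hs2
    have h3 : ∑' n, a n * z ^ (n + q) = z ^ q * ∑' n, a n * z ^ n := by
      rw [← tsum_mul_left]
      exact tsum_congr fun n => by rw [pow_add]; ring
    have tails : ∑' n, a (n + (K + q)) * z ^ (n + (K + q))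
        = ∑' n, a (n + K) * z ^ ((n + K) + q) := by
      apply tsum_congr
      intro n
      rw [show n + (K + q) = (n + K) + q by ring, hper (n + K) (by omega)]
    have expand : (1 - z ^ q) * ∑' n, a n * z ^ n
        = (∑' n, a n * z ^ n) - ∑' n, a n * z ^ (n + q) := by
      rw [h3]; ring
    rw [expand, ← h1, ← h2, tails, hG]
    ring
  -- Step D: roots vanish
  have hQ : ∀ m : ℕ, 1 ≤ m → m < q →
      ∑ j ∈ Finset.range q, a (K + j) * (e ((m : ℝ) / q)) ^ j = 0 := by
    intro m hm1 hmq
    set ζ : ℂ := e ((m : ℝ) / q) with hζ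
    have hqR : (0:ℝ) < q := by positivity
    have hζnorm : ‖ζ‖ = 1 := e_norm _
    have hζq : ζ ^ q = 1 := by
      rw [hζ, ← e_nat_mul]
      rw [show (q : ℝ) * ((m : ℝ) / q) = ((m : ℤ) : ℝ) by push_cast; field_simp]
      exact e_int m
    -- get the bound
    obtain ⟨M, hM⟩ := hbd ((m : ℚ) / q) ⟨by positivity, by
      rw [div_lt_one (by positivity)]; exact_mod_cast hmq⟩
    have hMval : ∀ r : ℝ, 0 ≤ r → r < 1 → ‖∑' n, a n * ((r : ℂ) * ζ) ^ n‖ ≤ M := by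
      intro r hr0 hr1
      have := hM r hr0 hr1
      have heq : ∀ n : ℕ, a n * (r : ℂ) ^ n * e (n * (((m : ℚ) / q : ℚ) : ℝ))
          = a n * ((r : ℂ) * ζ) ^ n := by
        intro n
        rw [show (((m : ℚ) / q : ℚ) : ℝ) = (m : ℝ) / q by push_cast; ring]
        rw [e_nat_mul, mul_pow, hζ]
        ring
      rwa [tsum_congr heq] at this
    -- bound on G along the ray
    have hGbd : ∀ r : ℝ, 0 ≤ r → r < 1 → ‖G ((r : ℂ) * ζ)‖ ≤ (1 - r ^ q) * M := by
      intro r hr0 hr1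
      have hnorm : ‖(r : ℂ) * ζ‖ < 1 := by
        rw [norm_mul, hζnorm, mul_one, Complex.norm_real, Real.norm_eq_abs,
          _root_.abs_of_nonneg hr0]
        exact hr1
      rw [← hid _ hnorm, norm_mul]
      have h1 : ((r : ℂ) * ζ) ^ q = (r : ℂ) ^ q := by
        rw [mul_pow, hζq, mul_one]
      have h2 : ‖1 - ((r : ℂ) * ζ) ^ q‖ = 1 - r ^ q := by
        rw [h1, ← Complex.ofReal_pow, ← Complex.ofReal_one, ← Complex.ofReal_sub,
          Complex.norm_real, Real.norm_eq_abs, _root_.abs_of_nonneg]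
        nlinarith [pow_le_one₀ hr0 hr1.le (n := q)]
      rw [h2]
      have hM0 : 0 ≤ M := le_trans (norm_nonneg _) (hMval 0 le_rfl one_pos)
      have := hMval r hr0 hr1
      have h1r : 0 ≤ 1 - r ^ q := by nlinarith [pow_le_one₀ hr0 hr1.le (n := q)]
      exact mul_le_mul_of_nonneg_left this h1r
    -- take the limit r → 1⁻ along the sequence 1 - 1/(k+2)
    have hGζ : G ζ = 0 := by
      set s : ℕ → ℝ := fun k => 1 - 1 / (k + 1) with hs
      have hs0 : ∀ k, 0 ≤ s k := by
        intro k
        have : 1 / ((k : ℝ) + 1) ≤ 1 := by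
          rw [div_le_one (by positivity)]; linarith [Nat.cast_nonneg (α := ℝ) k]
        simp only [hs]; linarith
      have hs1 : ∀ k, s k < 1 := by
        intro k
        have : 0 < 1 / ((k : ℝ) + 1) := by positivity
        simp only [hs]; linarith
      have hstend : Tendsto s atTop (nhds 1) := by
        have h0 : Tendsto (fun k : ℕ => 1 / ((k : ℝ) + 1)) atTop (nhds 0) :=
          tendsto_one_div_add_atTop_nhds_zero_nat
        have := (tendsto_const_nhds (x := (1:ℝ)) (f := atTop (α := ℕ))).sub h0
        simpa [hs, one_div] using this
      have hGcont : Continuous G := by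
        rw [hG]
        apply Continuous.sub <;> exact continuous_finset_sum _ fun i _ =>
          (continuous_const.mul (continuous_pow _))
      have hzt : Tendsto (fun k => ((s k : ℝ) : ℂ) * ζ) atTop (nhds ζ) := by
        have : Tendsto (fun k => ((s k : ℝ) : ℂ)) atTop (nhds 1) :=
          (Complex.continuous_ofReal.tendsto 1).comp hstend
        simpa using this.mul_const ζ
      have hnt : Tendsto (fun k => ‖G (((s k : ℝ) : ℂ) * ζ)‖) atTop (nhds ‖G ζ‖) :=
        (continuous_norm.tendsto _).comp (hGcont.tendsto ζ |>.comp hzt)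
      have hbt : Tendsto (fun k => (1 - (s k) ^ q) * M) atTop (nhds 0) := by
        have hp : Tendsto (fun k => (s k) ^ q) atTop (nhds 1) := by
          simpa using (hstend.pow q)
        have : Tendsto (fun k => (1 - (s k) ^ q)) atTop (nhds 0) := by
          have := tendsto_const_nhds (x := (1:ℝ)) (f := atTop (α := ℕ)) |>.sub hp
          simpa using this
        simpa using this.mul_const M
      have hle : ‖G ζ‖ ≤ 0 :=
        le_of_tendsto_of_tendsto' hnt hbt fun k => hGbd (s k) (hs0 k) (hs1 k)
      have : ‖G ζ‖ = 0 := le_antisymm hle (norm_nonneg _)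
      exact norm_eq_zero.mp this
    -- conclude Q(ζ) = 0
    have hGform : G ζ = ζ ^ K * ∑ j ∈ Finset.range q, a (K + j) * ζ ^ j := by
      simp only [hG]
      have h1 : ∑ n ∈ Finset.range K, a n * ζ ^ (n + q)
          = ∑ n ∈ Finset.range K, a n * ζ ^ n := by
        apply Finset.sum_congr rfl
        intro n _
        rw [pow_add, hζq, mul_one]
      rw [h1]
      rw [show ∑ n ∈ Finset.range (K + q), a n * ζ ^ n
          - ∑ n ∈ Finset.range K, a n * ζ ^ n
          = ∑ n ∈ Finset.Ico K (K + q), a n * ζ ^ n by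
        rw [Finset.sum_Ico_eq_sub _ (by omega)]]
      rw [Finset.sum_Ico_eq_sum_range]
      simp only [show K + q - K = q by omega]
      rw [Finset.mul_sum]
      apply Finset.sum_congr rfl
      intro j _
      rw [pow_add]
      ring
    have hζ0 : ζ ≠ 0 := by
      intro h
      rw [h] at hζnorm
      simp at hζnorm
    rw [hGform] at hGζ
    rcases mul_eq_zero.mp hGζ with h | h
    · exact absurd h (pow_ne_zero _ hζ0)
    · exact h
  -- Step E: discrete Fourier inversion
  have hconst : ∀ j : ℕ, j < q → (q : ℂ) * a (K + j)
      = ∑ t ∈ Finset.range q, a (K + t) := by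
    intro j hj
    have hqR : (0:ℝ) < q := by positivity
    -- double sum
    have way1 : ∑ m ∈ Finset.range q, ∑ t ∈ Finset.range q,
        a (K + t) * e (((t : ℝ) - j) * m / q) = (q : ℂ) * a (K + j) := by
      rw [Finset.sum_comm]
      have hterm : ∀ t ∈ Finset.range q, ∑ m ∈ Finset.range q,
          a (K + t) * e (((t : ℝ) - j) * m / q)
          = if t = j then (q : ℂ) * a (K + j) else 0 := by
        intro t ht
        rw [Finset.mem_range] at ht
        have harg : ∀ m : ℕ, ((t : ℝ) - j) * m / q = (m : ℝ) * (((t : ℝ) - j) / q) := by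
          intro m; ring
        by_cases htj : t = j
        · subst htj
          simp only [sub_self, zero_mul, zero_div, if_pos rfl]
          have he0 : e (0 : ℝ) = 1 := by unfold e; simp
          rw [Finset.sum_congr rfl fun m _ => by rw [he0, mul_one]]
          rw [Finset.sum_const, Finset.card_range, nsmul_eq_mul]
          simp
        · rw [if_neg htj]
          set w : ℂ := e (((t : ℝ) - j) / q) with hw
          have hsum : ∑ m ∈ Finset.range q, a (K + t) * e (((t : ℝ) - j) * m / q)
              = a (K + t) * ∑ m ∈ Finset.range q, w ^ m := by
            rw [Finset.mul_sum]
            apply Finset.sum_congr rfl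
            intro m _
            rw [harg m, e_nat_mul, hw]
          rw [hsum]
          have hwne : w ≠ 1 := by
            apply e_ne_one
            · have : (t : ℝ) - j ≠ 0 := by
                intro h
                apply htj
                have : (t : ℝ) = j := by linarith
                exact_mod_cast this
              exact div_ne_zero this (ne_of_gt hqR)
            · rw [abs_div, abs_of_pos hqR, div_lt_one hqR]
              rw [abs_sub_lt_iff]
              have htq : (t : ℝ) < q := by exact_mod_cast ht
              have hjq : (j : ℝ) < q := by exact_mod_cast hj
              have hj0 : (0:ℝ) ≤ j := Nat.cast_nonneg j
              have ht0 : (0:ℝ) ≤ t := Nat.cast_nonneg t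
              constructor <;> linarith
          have hwq : w ^ q = 1 := by
            rw [hw, ← e_nat_mul]
            rw [show (q : ℝ) * (((t : ℝ) - j) / q) = (((t : ℤ) - j : ℤ) : ℝ) by
              push_cast; field_simp]
            exact e_int _
          have : ∑ m ∈ Finset.range q, w ^ m = 0 := by
            rw [geom_sum_eq hwne, hwq]
            simp
          rw [this, mul_zero]
      rw [Finset.sum_congr rfl hterm]
      simp [Finset.sum_ite_eq' (Finset.range q), Finset.mem_range.mpr hj]
    have way2 : ∑ m ∈ Finset.range q, ∑ t ∈ Finset.range q,
        a (K + t) * e (((t : ℝ) - j) * m / q) = ∑ t ∈ Finset.range q, a (K + t) := by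
      have hterm : ∀ m ∈ Finset.range q, ∑ t ∈ Finset.range q,
          a (K + t) * e (((t : ℝ) - j) * m / q)
          = if m = 0 then ∑ t ∈ Finset.range q, a (K + t) else 0 := by
        intro m hm
        rw [Finset.mem_range] at hm
        by_cases hm0 : m = 0
        · subst hm0
          simp only [if_pos rfl]
          apply Finset.sum_congr rfl
          intro t _
          have : e (((t : ℝ) - j) * 0 / q) = 1 := by
            rw [show ((t : ℝ) - j) * 0 / q = (0:ℝ) by ring]
            unfold e; simp
          have he0 : e (0 : ℝ) = 1 := by unfold e; simp
          simp [this, he0]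
        · rw [if_neg hm0]
          have hm1 : 1 ≤ m := by omega
          have hsplit : ∀ t : ℕ, a (K + t) * e (((t : ℝ) - j) * m / q)
              = (a (K + t) * (e ((m : ℝ) / q)) ^ t) * e (-(j : ℝ) * m / q) := by
            intro t
            rw [show ((t : ℝ) - j) * m / q = (t : ℝ) * ((m : ℝ) / q) + (-(j : ℝ) * m / q) by
              ring]
            rw [e_add, e_nat_mul]
            ring
          rw [Finset.sum_congr rfl fun t _ => hsplit t, ← Finset.sum_mul,
            hQ m hm1 hm, zero_mul]
      rw [Finset.sum_congr rfl hterm]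
      simp [Finset.sum_ite_eq' (Finset.range q), Finset.mem_range.mpr (show 0 < q by omega)]
    rw [← way1, way2]
  -- finish
  intro j j' hjle hj'le
  have hj : j < q := by omega
  have hj' : j' < q := by omega
  have h1 := hconst j hj
  have h2 := hconst j' hj'
  have hqne : (q : ℂ) ≠ 0 := by
    exact_mod_cast Nat.cast_ne_zero.mpr (by omega)
  have : (q : ℂ) * a (K + j) = (q : ℂ) * a (K + j') := by rw [h1, h2]
  exact mul_left_cancel₀ hqne this
end

section
/- Let f : ℕ → ℕ be strictly increasing and α ∈ E(f,a), i.e., the factoradic digits satisfy s_{f(i)+1}(α) ≤ (f(i)+1)/a_i for all i. Then for every n ∈ ℕ, the fractional part {f(n)!·α} ≤ 1/a_n + e/(f(n)+1). -/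
theorem stmt_16 (f : ℕ → ℕ) (hf : StrictMono f)
    (a : ℕ → ℕ) (ha : ∀ n, 0 < a n)
    (α : ℝ) (hα : α ∈ Set.Ico (0 : ℝ) 1)
    (s : ℕ → ℕ) (hdig : ∀ i : ℕ, 1 ≤ i → s i ≤ i - 1)
    (hrep : α = ∑' n : ℕ, (s (n + 1) : ℝ) / (Nat.factorial (n + 1)))
    (hE : ∀ i : ℕ, 1 ≤ i → (s (f i + 1) : ℝ) ≤ ((f i : ℝ) + 1) / (a i)) :
    ∀ n : ℕ, 1 ≤ n →
      Int.fract ((Nat.factorial (f n) : ℝ) * α) ≤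
        1 / (a n) + Real.exp 1 / ((f n : ℝ) + 1) := by
  intro n hn
  set m := f n with hm
  set g : ℕ → ℝ := fun j => (s (j + 1) : ℝ) / (Nat.factorial (j + 1)) with hg
  have hfacpos : ∀ j : ℕ, (0 : ℝ) < (Nat.factorial j : ℝ) := fun j => by
    exact_mod_cast j.factorial_pos
  have hg_nonneg : ∀ j, 0 ≤ g j := fun j =>
    div_nonneg (Nat.cast_nonneg _) (le_of_lt (hfacpos _))
  have hs_le : ∀ j : ℕ, s (j + 1) ≤ j := by
    intro j
    have h := hdig (j + 1) (by omega)
    omega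
  have hg_le : ∀ j, g j ≤ 1 / (Nat.factorial j : ℝ) := by
    intro j
    rw [hg, div_le_div_iff₀ (hfacpos _) (hfacpos _)]
    have : s (j + 1) * Nat.factorial j ≤ Nat.factorial (j + 1) := by
      calc s (j + 1) * Nat.factorial j ≤ (j + 1) * Nat.factorial j :=
            Nat.mul_le_mul_right _ (by have := hs_le j; omega)
        _ = Nat.factorial (j + 1) := (Nat.factorial_succ j).symm
    calc (s (j + 1) : ℝ) * (Nat.factorial j : ℝ) = ((s (j + 1) * Nat.factorial j : ℕ) : ℝ) := by
          push_cast; ring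
      _ ≤ ((Nat.factorial (j + 1) : ℕ) : ℝ) := by exact_mod_cast this
      _ = 1 * (Nat.factorial (j + 1) : ℝ) := by ring
  have hsum1 : Summable (fun j : ℕ => 1 / (Nat.factorial j : ℝ)) := by
    simpa using Real.summable_pow_div_factorial 1
  have hsum : Summable g := Summable.of_nonneg_of_le hg_nonneg hg_le hsum1
  -- split α
  have hsplit : ∑ i ∈ Finset.range m, g i + ∑' i, g (i + m) = ∑' i, g i :=
    Summable.sum_add_tsum_nat_add m hsum
  set T : ℝ := ∑' i, g (i + m) with hT
  have hTsum : Summable (fun i => g (i + m)) := (summable_nat_add_iff m).mpr hsum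
  have hT_nonneg : 0 ≤ T := tsum_nonneg fun i => hg_nonneg _
  -- integer part
  set N : ℕ := ∑ i ∈ Finset.range m, s (i + 1) * (Nat.factorial m / Nat.factorial (i + 1)) with hN
  have hNcast : (N : ℝ) = (Nat.factorial m : ℝ) * ∑ i ∈ Finset.range m, g i := by
    rw [hN, Finset.mul_sum, Nat.cast_sum]
    refine Finset.sum_congr rfl fun i hi => ?_
    have hdvd : Nat.factorial (i + 1) ∣ Nat.factorial m :=
      Nat.factorial_dvd_factorial (Finset.mem_range.mp hi)
    rw [Nat.cast_mul, Nat.cast_div hdvd (ne_of_gt (hfacpos _))]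
    simp only [hg]
    field_simp [hg]
  have hαsplit : (Nat.factorial m : ℝ) * α = (N : ℝ) + (Nat.factorial m : ℝ) * T := by
    rw [hrep, ← hsplit, hNcast]; ring
  -- fract bound
  have hfract : Int.fract ((Nat.factorial m : ℝ) * α) ≤ (Nat.factorial m : ℝ) * T := by
    rw [hαsplit, Int.fract_natCast_add]
    have hx : (0 : ℝ) ≤ (Nat.factorial m : ℝ) * T :=
      mul_nonneg (le_of_lt (hfacpos _)) hT_nonneg
    have hfl : (0 : ℝ) ≤ (⌊(Nat.factorial m : ℝ) * T⌋ : ℝ) := by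
      exact_mod_cast Int.floor_nonneg.mpr hx
    rw [Int.fract]; linarith
  -- split T
  have hTsplit : g m + ∑' i, g (i + 1 + m) = T := by
    have := Summable.sum_add_tsum_nat_add 1 hTsum
    simpa using this
  have hTsum2 : Summable (fun i => g (i + 1 + m)) := (summable_nat_add_iff 1).mpr hTsum
  -- first term bound
  have hterm1 : (Nat.factorial m : ℝ) * g m ≤ 1 / (a n) := by
    have hEn : (s (m + 1) : ℝ) ≤ ((m : ℝ) + 1) / (a n) := hE n hn
    have hfacsucc : (Nat.factorial (m + 1) : ℝ) = ((m : ℝ) + 1) * (Nat.factorial m : ℝ) := by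
      rw [Nat.factorial_succ]; push_cast; ring
    have hapos : (0 : ℝ) < (a n : ℝ) := by exact_mod_cast ha n
    have hm1pos : (0 : ℝ) < (m : ℝ) + 1 := by positivity
    have hgm : g m = (s (m + 1) : ℝ) / (Nat.factorial (m + 1) : ℝ) := rfl
    have key : (Nat.factorial m : ℝ) * g m = (s (m + 1) : ℝ) / ((m : ℝ) + 1) := by
      rw [hgm, hfacsucc]
      field_simp
    rw [key, div_le_div_iff₀ hm1pos hapos]
    have hEn' : (s (m + 1) : ℝ) * (a n : ℝ) ≤ (m : ℝ) + 1 := by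
      rw [← le_div_iff₀ hapos]; exact hEn
    linarith
  -- second term bound
  have hterm2 : (Nat.factorial m : ℝ) * ∑' i, g (i + 1 + m) ≤ Real.exp 1 / ((m : ℝ) + 1) := by
    have hbound : ∀ i : ℕ, (Nat.factorial m : ℝ) * g (i + 1 + m) ≤
        (1 / ((m : ℝ) + 1)) * (1 / (Nat.factorial i : ℝ)) := by
      intro i
      have hdvd : Nat.factorial (m + 1) * Nat.factorial i ∣ Nat.factorial (m + 1 + i) :=
        Nat.factorial_mul_factorial_dvd_factorial_add (m + 1) i
      have hle : Nat.factorial (m + 1) * Nat.factorial i ≤ Nat.factorial (m + 1 + i) :=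
        Nat.le_of_dvd (Nat.factorial_pos _) hdvd
      have h1 : g (i + 1 + m) ≤ 1 / (Nat.factorial (i + m + 1) : ℝ) := by
        have := hg_le (i + 1 + m)
        calc g (i + 1 + m) ≤ 1 / (Nat.factorial (i + 1 + m) : ℝ) := this
          _ = 1 / (Nat.factorial (i + m + 1) : ℝ) := by ring_nf
      have h2 : (Nat.factorial m : ℝ) / (Nat.factorial (i + m + 1) : ℝ) ≤
          (1 / ((m : ℝ) + 1)) * (1 / (Nat.factorial i : ℝ)) := by
        have hfs : ((m : ℝ) + 1) * (Nat.factorial m : ℝ) = (Nat.factorial (m + 1) : ℝ) := by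
          rw [Nat.factorial_succ]; push_cast; ring
        have hle' : ((Nat.factorial (m + 1) : ℝ)) * (Nat.factorial i : ℝ) ≤
            (Nat.factorial (i + m + 1) : ℝ) := by
          have heq : m + 1 + i = i + m + 1 := by omega
          rw [heq] at hle
          exact_mod_cast hle
        have hm1pos : (0 : ℝ) < (m : ℝ) + 1 := by positivity
        have hRHS : (1 / ((m : ℝ) + 1)) * (1 / (Nat.factorial i : ℝ)) =
            1 / (((m : ℝ) + 1) * (Nat.factorial i : ℝ)) := by
          rw [div_mul_div_comm, one_mul]
        rw [hRHS, div_le_div_iff₀ (hfacpos _) (by positivity)]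
        have hkey : (Nat.factorial m : ℝ) * (((m : ℝ) + 1) * (Nat.factorial i : ℝ)) =
            (Nat.factorial (m + 1) : ℝ) * (Nat.factorial i : ℝ) := by
          rw [← hfs]; ring
        linarith
      calc (Nat.factorial m : ℝ) * g (i + 1 + m)
          ≤ (Nat.factorial m : ℝ) * (1 / (Nat.factorial (i + m + 1) : ℝ)) :=
            mul_le_mul_of_nonneg_left h1 (le_of_lt (hfacpos _))
        _ = (Nat.factorial m : ℝ) / (Nat.factorial (i + m + 1) : ℝ) := by ring
        _ ≤ _ := h2
    have hsumR : Summable (fun i : ℕ => (1 / ((m : ℝ) + 1)) * (1 / (Nat.factorial i : ℝ))) :=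
      hsum1.mul_left _
    have hsumL : Summable (fun i : ℕ => (Nat.factorial m : ℝ) * g (i + 1 + m)) :=
      hTsum2.mul_left _
    calc (Nat.factorial m : ℝ) * ∑' i, g (i + 1 + m)
        = ∑' i, (Nat.factorial m : ℝ) * g (i + 1 + m) := (tsum_mul_left).symm
      _ ≤ ∑' i, (1 / ((m : ℝ) + 1)) * (1 / (Nat.factorial i : ℝ)) :=
          Summable.tsum_le_tsum hbound hsumL hsumR
      _ = (1 / ((m : ℝ) + 1)) * ∑' i, 1 / (Nat.factorial i : ℝ) := tsum_mul_left
      _ = Real.exp 1 / ((m : ℝ) + 1) := by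
          have : Real.exp 1 = ∑' i : ℕ, 1 / (Nat.factorial i : ℝ) := by
            rw [Real.exp_eq_exp_ℝ, NormedSpace.exp_eq_tsum_div]
            simp
          rw [this]; ring
  calc Int.fract ((Nat.factorial m : ℝ) * α) ≤ (Nat.factorial m : ℝ) * T := hfract
    _ = (Nat.factorial m : ℝ) * g m + (Nat.factorial m : ℝ) * ∑' i, g (i + 1 + m) := by
        rw [← hTsplit]; ring
    _ ≤ 1 / (a n) + Real.exp 1 / ((m : ℝ) + 1) := add_le_add hterm1 hterm2
end

section
/- The indicator function of A = {n + n! : n ∈ ℕ}, viewed as a point χ_A ∈ {0,1}^ℤ (extended by 0 to nonpositive integers), has shift-orbit closure equal to {0, σⁿ(χ_A), σⁿ(χ_{{0}}) : n ∈ ℤ} in the product topology, where σ is the shift map and 0 is the all-zeros sequence. -/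
/-- The indicator of A = {n + n! : n ∈ ℕ, n ≥ 1} as a point of the product space ℤ → ℝ. -/
noncomputable def chiA : ℤ → ℝ :=
  Set.indicator {k : ℤ | ∃ n : ℕ, 1 ≤ n ∧ k = (n : ℤ) + (Nat.factorial n : ℤ)} 1

/-- The indicator of {0} ⊂ ℤ. -/
noncomputable def chi0 : ℤ → ℝ := Set.indicator {(0 : ℤ)} 1

/-- The shift by n ∈ ℤ. -/
def shift (n : ℤ) (x : ℤ → ℝ) : ℤ → ℝ := fun k => x (k + n)

def AZ : Set ℤ := {k : ℤ | ∃ n : ℕ, 1 ≤ n ∧ k = (n : ℤ) + (Nat.factorial n : ℤ)}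

lemma chiA_def : chiA = Set.indicator AZ 1 := rfl

lemma AZ_two_le {k : ℤ} (h : k ∈ AZ) : 2 ≤ k := by
  obtain ⟨n, hn, rfl⟩ := h
  have := n.factorial_pos
  omega

lemma AZ_mono : ∀ p q : ℕ, p ≤ q → (p : ℤ) + p.factorial ≤ (q : ℤ) + q.factorial := by
  intro p q h
  have := Nat.factorial_le h
  omega

lemma AZ_gap {a b : ℤ} (ha : a ∈ AZ) (hb : b ∈ AZ) (hab : a < b) : a ≤ 2 * (b - a) := by
  obtain ⟨m, hm1, rfl⟩ := ha
  obtain ⟨m', hm1', rfl⟩ := hb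
  have hmm : m < m' := by
    by_contra h
    exact absurd (AZ_mono m' m (by omega)) (by omega)
  have h1 : (m + 1).factorial ≤ m'.factorial := Nat.factorial_le hmm
  have h2 : (m + 1).factorial = (m + 1) * m.factorial := rfl
  have h3 : 1 ≤ m.factorial := m.factorial_pos
  have h1' : ((m + 1) : ℤ) * m.factorial ≤ (m'.factorial : ℤ) := by
    rw [h2] at h1; exact_mod_cast h1
  have h3' : (1 : ℤ) ≤ m.factorial := by exact_mod_cast h3
  have hm1z : (1 : ℤ) ≤ m := by exact_mod_cast hm1
  have hmm' : (m : ℤ) + 1 ≤ m' := by exact_mod_cast hmm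
  nlinarith [mul_le_mul_of_nonneg_left h3' (by linarith : (0:ℤ) ≤ m)]

lemma chiA_zero_or_one (k : ℤ) : chiA k = 0 ∨ chiA k = 1 := by
  rw [chiA_def]
  by_cases h : k ∈ AZ
  · right; simp [Set.indicator_of_mem h]
  · left; simp [Set.indicator_of_notMem h]

lemma chiA_eq_one_iff {k : ℤ} : chiA k = 1 ↔ k ∈ AZ := by
  rw [chiA_def]
  by_cases h : k ∈ AZ
  · simp [Set.indicator_of_mem h, h]
  · simp [Set.indicator_of_notMem h, h]

lemma chiA_no_sol {c : ℤ} (hc : c ≠ 0) :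
    ∀ᶠ j : ℕ in Filter.atTop, chiA (c + j + j.factorial) = 0 := by
  rw [Filter.eventually_atTop]
  refine ⟨(3 * |c| + 1).toNat + 1, fun j hj => ?_⟩
  have hj1 : 1 ≤ j := le_trans (Nat.le_add_left 1 _) hj
  have hjz : 3 * |c| + 1 ≤ (j : ℤ) := by
    have : ((3 * |c| + 1).toNat : ℤ) ≤ (j : ℤ) := by exact_mod_cast le_trans (Nat.le_succ _) hj
    omega
  have hjA : (j : ℤ) + j.factorial ∈ AZ := ⟨j, hj1, rfl⟩
  rcases chiA_zero_or_one (c + j + j.factorial) with h | h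
  · exact h
  exfalso
  have hA : c + (j : ℤ) + j.factorial ∈ AZ := chiA_eq_one_iff.mp h
  have hjf : (1 : ℤ) ≤ j.factorial := by exact_mod_cast j.factorial_pos
  have habs : 0 < |c| := abs_pos.mpr hc
  rcases lt_or_gt_of_ne hc with hneg | hpos
  · have hlt : c + (j : ℤ) + j.factorial < (j : ℤ) + j.factorial := by linarith
    have := AZ_gap hA hjA hlt
    have hcabs : |c| = -c := abs_of_neg hneg
    omega
  · have hlt : (j : ℤ) + j.factorial < c + (j : ℤ) + j.factorial := by linarith
    have := AZ_gap hjA hA hlt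
    have hcabs : |c| = c := abs_of_pos hpos
    omega

theorem stmt_19 :
    closure {y : ℤ → ℝ | ∃ n : ℤ, y = shift n chiA} =
      {0} ∪ {y : ℤ → ℝ | ∃ n : ℤ, y = shift n chiA} ∪
        {y : ℤ → ℝ | ∃ n : ℤ, y = shift n chi0} := by
  apply Set.Subset.antisymm
  · intro y hy
    rw [mem_closure_iff_seq_limit] at hy
    obtain ⟨x, hxS, hx⟩ := hy
    choose n hn using hxS
    have hcoord : ∀ k : ℤ, Filter.Tendsto (fun j => chiA (k + n j)) Filter.atTop (nhds (y k)) := by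
      intro k
      have h1 := tendsto_pi_nhds.1 hx k
      refine h1.congr fun j => ?_
      rw [hn j]; rfl
    have hval : ∀ k, y k = 0 ∨ y k = 1 := by
      intro k
      have hcl : IsClosed ({0, 1} : Set ℝ) := (Set.toFinite _).isClosed
      have := hcl.mem_of_tendsto (hcoord k)
        (Filter.Eventually.of_forall fun j => by
          rcases chiA_zero_or_one (k + n j) with h | h <;> simp [h])
      simpa using this
    have hone : ∀ k : ℤ, y k = 1 → ∀ᶠ j in Filter.atTop, k + n j ∈ AZ := by
      intro k hk
      have h2 := (hk ▸ hcoord k).eventually (eventually_gt_nhds (by norm_num : (1:ℝ)/2 < 1))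
      refine h2.mono fun j hj => ?_
      rcases chiA_zero_or_one (k + n j) with h | h
      · rw [h] at hj; norm_num at hj
      · exact chiA_eq_one_iff.mp h
    by_cases hb : ∃ m : ℤ, ∃ᶠ j in Filter.atTop, n j = m
    · obtain ⟨m, hm⟩ := hb
      refine Or.inl (Or.inr ⟨m, funext fun k => ?_⟩)
      have hfreq : ∃ᶠ j in Filter.atTop, chiA (k + n j) ∈ ({chiA (k + m)} : Set ℝ) :=
        hm.mono fun j hj => by rw [hj]; exact Set.mem_singleton _
      have := mem_closure_of_frequently_of_tendsto hfreq (hcoord k)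
      rwa [closure_singleton, Set.mem_singleton_iff] at this
    · push_neg at hb
      have hb' : ∀ m : ℤ, ∀ᶠ j in Filter.atTop, n j ≠ m := by
        intro m
        have := hb m
        exact this
      have honce : ∀ k1 k2 : ℤ, k1 < k2 → y k1 = 1 → y k2 = 1 → False := by
        intro k1 k2 hlt h1 h2
        have e1 := hone k1 h1
        have e2 := hone k2 h2
        have efin : ∀ᶠ j in Filter.atTop,
            ∀ m ∈ Set.Icc (2 - k1) (2 * (k2 - k1) - k1), n j ≠ m :=
          (Filter.eventually_all_finite (Set.finite_Icc _ _)).mpr fun m _ => hb' m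
        obtain ⟨j, hj1, hj2, hj3⟩ := (e1.and (e2.and efin)).exists
        have hb1 := AZ_two_le hj1
        have hgap := AZ_gap hj1 hj2 (by omega)
        exact hj3 (n j) (Set.mem_Icc.mpr ⟨by omega, by omega⟩) rfl
      by_cases hz : ∀ k, y k = 0
      · exact Or.inl (Or.inl (funext fun k => hz k))
      · push_neg at hz
        obtain ⟨k, hk⟩ := hz
        have hk1 : y k = 1 := (hval k).resolve_left hk
        refine Or.inr ⟨-k, funext fun j => ?_⟩
        show y j = chi0 (j + -k)
        by_cases hjk : j = k
        · subst hjk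
          simp [chi0, hk1]
        · have hy0 : y j = 0 := by
            rcases hval j with h | h
            · exact h
            · exfalso
              rcases lt_or_gt_of_ne hjk with hl | hl
              · exact honce j k hl h hk1
              · exact honce k j hl hk1 h
          rw [hy0]
          have hne : j + -k ≠ 0 := by omega
          simp [chi0, Set.indicator_apply, hne]
  · rintro y ((hy0 | hyS) | ⟨m, rfl⟩)
    · rw [Set.mem_singleton_iff] at hy0
      subst hy0
      refine mem_closure_of_tendsto (b := Filter.atTop) (f := fun j : ℕ => shift (-(j : ℤ)) chiA) ?_
        (Filter.Eventually.of_forall fun j => ⟨-(j : ℤ), rfl⟩)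
      rw [tendsto_pi_nhds]
      intro k
      have hEv : ∀ᶠ j : ℕ in Filter.atTop, (0 : ℝ) = chiA (k + -(j : ℤ)) := by
        rw [Filter.eventually_atTop]
        refine ⟨k.toNat, fun j hj => ?_⟩
        have hk2 : k + -(j : ℤ) < 2 := by
          have h1 : (k.toNat : ℤ) ≤ j := by exact_mod_cast hj
          have h2 := Int.self_le_toNat k
          omega
        rcases chiA_zero_or_one (k + -(j : ℤ)) with h | h
        · exact h.symm
        · exact absurd (AZ_two_le (chiA_eq_one_iff.mp h)) (by omega)
      exact Filter.Tendsto.congr' hEv tendsto_const_nhds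
    · exact subset_closure hyS
    · refine mem_closure_of_tendsto (b := Filter.atTop)
        (f := fun j : ℕ => shift (m + j + j.factorial) chiA) ?_
        (Filter.Eventually.of_forall fun j => ⟨m + j + j.factorial, rfl⟩)
      rw [tendsto_pi_nhds]
      intro k
      show Filter.Tendsto (fun j : ℕ => chiA (k + (m + j + j.factorial)))
        Filter.atTop (nhds (chi0 (k + m)))
      simp only [show ∀ j : ℕ, k + (m + (j : ℤ) + j.factorial)
        = (k + m) + j + j.factorial from fun j => by ring]
      by_cases hc : k + m = 0
      · have hEv : ∀ᶠ j : ℕ in Filter.atTop,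
            chi0 (k + m) = chiA ((k + m) + j + j.factorial) := by
          rw [Filter.eventually_atTop]
          refine ⟨1, fun j hj => ?_⟩
          rw [hc]
          have : chiA ((0 : ℤ) + j + j.factorial) = 1 :=
            chiA_eq_one_iff.mpr ⟨j, hj, by ring⟩
          rw [this]
          simp [chi0]
        exact Filter.Tendsto.congr' hEv tendsto_const_nhds
      · have hEv : ∀ᶠ j : ℕ in Filter.atTop,
            chi0 (k + m) = chiA ((k + m) + j + j.factorial) := by
          filter_upwards [chiA_no_sol hc] with j hj
          rw [hj]
          simp [chi0, Set.indicator_apply, hc]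
        exact Filter.Tendsto.congr' hEv tendsto_const_nhds
end
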